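/- arXiv:1902.01644 — 2 statements merged into one kernel-verified Lean document; each statement's English description precedes it below -/
import Mathlib

section
/- Let f : ℝ^{m×n} → ℝ be convex and differentiable, and let X* be an optimal solution of min_{‖X‖_* ≤ 1} f(X) with singular value decomposition X* = Σ_{i=1}^r σ_i u_i v_iᵀ (σ_i > 0). Then for every i ∈ {1, …, r}, −u_iᵀ ∇f(X*) v_i = σ_1(∇f(X*)); that is, the pairs (−u_i, v_i), i = 1, …, r, are all singular-vector pairs of ∇f(X*) corresponding to its largest singular value σ_1(∇f(X*)). -/
/- Common definitions: Frobenius norm and inner product, singular values in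
non-increasing order, trace (nuclear) norm, multiplicity of the top singular
value, Euclidean projection onto the trace-norm ball, the spectrahedron and its
projection, sorted eigenvalues of symmetric matrices, best rank-`r`
approximations, and the singular-value soft-thresholding (prox) operator. -/

open scoped BigOperators
open Matrix MeasureTheory ProbabilityTheory

attribute [local instance] Matrix.normedAddCommGroup Matrix.normedSpace

noncomputable section

/-- Frobenius norm of a real matrix. -/
def frobNorm {m n : ℕ} (X : Matrix (Fin m) (Fin n) ℝ) : ℝ :=
  Real.sqrt (∑ i, ∑ j, (X i j) ^ 2)

/-- Frobenius inner product of two real matrices. -/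
def frobInner {m n : ℕ} (A B : Matrix (Fin m) (Fin n) ℝ) : ℝ :=
  ∑ i, ∑ j, A i j * B i j

/-- The continuous linear functional `H ↦ ⟨G, H⟩` (Frobenius inner product);
`HasFDerivAt f (frobCLM G) X` says that `G` is the gradient of `f` at `X`. -/
def frobCLM {m n : ℕ} (G : Matrix (Fin m) (Fin n) ℝ) :
    Matrix (Fin m) (Fin n) ℝ →L[ℝ] ℝ :=
  LinearMap.toContinuousLinearMap
    { toFun := fun H => frobInner G H
      map_add' := fun x y => by
        simp [frobInner, Matrix.add_apply, mul_add, Finset.sum_add_distrib]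
      map_smul' := fun c x => by
        simp [frobInner, Matrix.smul_apply, smul_eq_mul, Finset.mul_sum, mul_left_comm] }

/-- The non-increasing (descending) rearrangement of a finite tuple of reals. -/
def sortedDesc {N : ℕ} (f : Fin N → ℝ) : Fin N → ℝ :=
  fun i => f (Tuple.sort f i.rev)

/-- The singular values of a real `m × n` matrix in non-increasing order
(the square roots of the eigenvalues of `Xᵀ * X`), padded with zeros so that
there are `n` of them. -/
def svalsFin {m n : ℕ} (X : Matrix (Fin m) (Fin n) ℝ) : Fin n → ℝ :=
  sortedDesc (fun i => Real.sqrt ((show (Xᵀ * X).IsHermitian by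
    simpa using Matrix.isHermitian_conjTranspose_mul_self X).eigenvalues i))

/-- `svalI X i` is the `(i+1)`-th largest singular value of `X` (i.e. `0`-indexed:
`svalI X 0 = σ₁(X)`), interpreted as `0` when the index is out of range. -/
def svalI {m n : ℕ} (X : Matrix (Fin m) (Fin n) ℝ) (i : ℕ) : ℝ :=
  if h : i < n then svalsFin X ⟨i, h⟩ else 0

/-- The trace norm (nuclear norm): the sum of the singular values. -/
def traceNorm {m n : ℕ} (X : Matrix (Fin m) (Fin n) ℝ) : ℝ :=
  ∑ i, svalsFin X i

/-- `#σ₁(X)`: the multiplicity of the largest singular value of `X`. -/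
def multTop {m n : ℕ} (X : Matrix (Fin m) (Fin n) ℝ) : ℕ :=
  Nat.card {i : Fin n // svalsFin X i = svalI X 0}

/-- `P` is the Euclidean (Frobenius) projection of `X` onto the trace-norm ball
of radius `τ`. -/
def IsTraceBallProj {m n : ℕ} (τ : ℝ) (X P : Matrix (Fin m) (Fin n) ℝ) : Prop :=
  traceNorm P ≤ τ ∧ ∀ Z, traceNorm Z ≤ τ → frobNorm (X - P) ≤ frobNorm (X - Z)

/-- The Euclidean projection onto the trace-norm ball of radius `τ`. -/
def projTraceBall {m n : ℕ} (τ : ℝ) (X : Matrix (Fin m) (Fin n) ℝ) :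
    Matrix (Fin m) (Fin n) ℝ :=
  open scoped Classical in
  if h : ∃ P, IsTraceBallProj τ X P then h.choose else 0

/-- `Y` is a best rank-`r` approximation of `X` in Frobenius norm. -/
def IsBestRankApprox {m n : ℕ} (r : ℕ) (X Y : Matrix (Fin m) (Fin n) ℝ) : Prop :=
  Y.rank ≤ r ∧ ∀ Z : Matrix (Fin m) (Fin n) ℝ, Z.rank ≤ r → frobNorm (X - Y) ≤ frobNorm (X - Z)

/-- The spectrahedron: positive semidefinite matrices of unit trace. -/
def SpectraSet (n : ℕ) : Set (Matrix (Fin n) (Fin n) ℝ) :=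
  {X | X.PosSemidef ∧ X.trace = 1}

/-- `P` is the Euclidean (Frobenius) projection of `X` onto the spectrahedron. -/
def IsSpectraProj {n : ℕ} (X P : Matrix (Fin n) (Fin n) ℝ) : Prop :=
  P ∈ SpectraSet n ∧ ∀ Z ∈ SpectraSet n, frobNorm (X - P) ≤ frobNorm (X - Z)

/-- The Euclidean projection onto the spectrahedron. -/
def projSpectra {n : ℕ} (X : Matrix (Fin n) (Fin n) ℝ) : Matrix (Fin n) (Fin n) ℝ :=
  open scoped Classical in
  if h : ∃ P, IsSpectraProj X P then h.choose else 0

/-- `evalI X i` is the `(i+1)`-th largest eigenvalue of the symmetric matrix `X`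
(`0`-indexed: `evalI X 0 = λ₁(X)`, `evalI X (n-1) = λ_n(X)`); junk value `0` if
`X` is not symmetric or the index is out of range. -/
def evalI {n : ℕ} (X : Matrix (Fin n) (Fin n) ℝ) (i : ℕ) : ℝ :=
  open scoped Classical in
  if h : i < n then
    (if hX : X.IsHermitian then sortedDesc hX.eigenvalues ⟨i, h⟩ else 0)
  else 0

/-- The multiplicity of the smallest eigenvalue of a symmetric matrix. -/
def multMinEig {n : ℕ} (X : Matrix (Fin n) (Fin n) ℝ) : ℕ :=
  Nat.card {i : Fin n // evalI X i = evalI X (n - 1)}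

/-- `Y` is the value at `X` of the singular-value soft-thresholding operator
`𝒯_η`, characterized as the proximal mapping of `η‖·‖_*`:
the (unique) minimizer of `Z ↦ ½‖X − Z‖_F² + η‖Z‖_*`. -/
def IsSVT {m n : ℕ} (η : ℝ) (X Y : Matrix (Fin m) (Fin n) ℝ) : Prop :=
  ∀ Z : Matrix (Fin m) (Fin n) ℝ,
    frobNorm (X - Y) ^ 2 / 2 + η * traceNorm Y ≤ frobNorm (X - Z) ^ 2 / 2 + η * traceNorm Z

/-- The singular-value soft-thresholding operator `𝒯_η`. -/
def softThresh {m n : ℕ} (η : ℝ) (X : Matrix (Fin m) (Fin n) ℝ) :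
    Matrix (Fin m) (Fin n) ℝ :=
  open scoped Classical in
  if h : ∃ Y, IsSVT η X Y then h.choose else 0

instance {m n : ℕ} : MeasurableSpace (Matrix (Fin m) (Fin n) ℝ) :=
  inferInstanceAs (MeasurableSpace (Fin m → Fin n → ℝ))

end


/- ========================================================================
   Auxiliary development for `stmt1`.
   ======================================================================== -/

noncomputable section Stmt1Aux
namespace Stmt1Aux

open Matrix

variable {m n : ℕ}

/-- Orthonormal family in the dot-product sense. -/
def ON {d : ℕ} {ι : Type*} [DecidableEq ι] (p : ι → Fin d → ℝ) : Prop :=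
  ∀ i j, p i ⬝ᵥ p j = (if i = j then (1:ℝ) else 0)

lemma dot_nonneg_self {d : ℕ} (x : Fin d → ℝ) : 0 ≤ x ⬝ᵥ x :=
  Finset.sum_nonneg fun i _ => mul_self_nonneg _

lemma dot_transpose {α β : Type*} [Fintype α] [Fintype β] (A : Matrix α β ℝ)
    (x : β → ℝ) (y : α → ℝ) : x ⬝ᵥ (Aᵀ *ᵥ y) = (A *ᵥ x) ⬝ᵥ y := by
  rw [Matrix.dotProduct_mulVec, Matrix.vecMul_transpose]

/-- Bessel's inequality, dot-product form. -/
lemma bessel {d : ℕ} {ι : Type*} [Fintype ι] [DecidableEq ι] {p : ι → Fin d → ℝ} (hp : ON p)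
    (x : Fin d → ℝ) : ∑ i, (p i ⬝ᵥ x) ^ 2 ≤ x ⬝ᵥ x := by
  set P : Matrix ι (Fin d) ℝ := Matrix.of fun i k => p i k with hP
  have hPPt : P * Pᵀ = 1 := by
    ext i j
    simp only [Matrix.mul_apply, Matrix.transpose_apply, Matrix.one_apply]
    exact hp i j
  set M : Matrix (Fin d) (Fin d) ℝ := 1 - Pᵀ * P with hM
  have hMt : Mᵀ = M := by
    simp [hM, Matrix.transpose_sub, Matrix.transpose_mul]
  have hMM : M * M = M := by
    simp only [hM, Matrix.sub_mul, Matrix.mul_sub, Matrix.one_mul, Matrix.mul_one]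
    have : Pᵀ * P * (Pᵀ * P) = Pᵀ * P := by
      calc Pᵀ * P * (Pᵀ * P) = Pᵀ * (P * Pᵀ) * P := by
            simp only [Matrix.mul_assoc]
        _ = Pᵀ * P := by rw [hPPt, Matrix.mul_one]
    rw [this]; abel
  have hsum : ∑ i, (p i ⬝ᵥ x) ^ 2 = x ⬝ᵥ ((Pᵀ * P) *ᵥ x) := by
    have h1 : ∑ i, (p i ⬝ᵥ x) ^ 2 = (P *ᵥ x) ⬝ᵥ (P *ᵥ x) := by
      simp only [dotProduct, Matrix.mulVec, sq]
      rfl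
    rw [h1, ← dot_transpose P x (P *ᵥ x), Matrix.mulVec_mulVec]
  have hpos : 0 ≤ x ⬝ᵥ (M *ᵥ x) := by
    have : x ⬝ᵥ (M *ᵥ x) = (M *ᵥ x) ⬝ᵥ (M *ᵥ x) := by
      conv_lhs => rw [← hMM]
      rw [← Matrix.mulVec_mulVec]
      conv_lhs => rw [← hMt]
      rw [dot_transpose, hMt]
    rw [this]; exact dot_nonneg_self _
  have hxx : x ⬝ᵥ (M *ᵥ x) = x ⬝ᵥ x - x ⬝ᵥ ((Pᵀ * P) *ᵥ x) := by
    simp [hM, Matrix.sub_mulVec, dotProduct_sub]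
  rw [hsum]
  linarith [hxx ▸ hpos]

/-- Cauchy–Schwarz for sums over a fintype. -/
lemma cs {ι : Type*} [Fintype ι] (a b : ι → ℝ) :
    ∑ i, a i * b i ≤ Real.sqrt (∑ i, a i ^ 2) * Real.sqrt (∑ i, b i ^ 2) := by
  have h := Finset.sum_mul_sq_le_sq_mul_sq Finset.univ a b
  have h1 : |∑ i, a i * b i| ≤ Real.sqrt ((∑ i, a i ^ 2) * ∑ i, b i ^ 2) := by
    rw [← Real.sqrt_sq_eq_abs]
    exact Real.sqrt_le_sqrt h
  calc ∑ i, a i * b i ≤ |∑ i, a i * b i| := le_abs_self _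
    _ ≤ Real.sqrt ((∑ i, a i ^ 2) * ∑ i, b i ^ 2) := h1
    _ = _ := Real.sqrt_mul (Finset.sum_nonneg fun i _ => sq_nonneg _) _

/-! ### Eigenvalue machinery for `Aᴴ * A` -/

lemma hermT (A : Matrix (Fin m) (Fin n) ℝ) : (Aᵀ * A).IsHermitian := by
  simpa using Matrix.isHermitian_conjTranspose_mul_self A

def eigs (A : Matrix (Fin m) (Fin n) ℝ) : Fin n → ℝ :=
  (hermT A).eigenvalues

def evec (A : Matrix (Fin m) (Fin n) ℝ) : Fin n → Fin n → ℝ :=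
  fun k => ⇑((hermT A).eigenvectorBasis k)

lemma eigs_nonneg (A : Matrix (Fin m) (Fin n) ℝ) (k : Fin n) : 0 ≤ eigs A k :=
  by
    have h : (Aᵀ * A).PosSemidef := by simpa using Matrix.posSemidef_conjTranspose_mul_self A
    exact h.eigenvalues_nonneg k

lemma evec_on (A : Matrix (Fin m) (Fin n) ℝ) : ON (evec A) := by
  intro i j
  have h := (hermT A).eigenvectorBasis.orthonormal
  rw [orthonormal_iff_ite] at h
  have := h i j
  simpa [PiLp.inner_apply, RCLike.inner_apply, dotProduct, mul_comm, evec] using this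

lemma AA_mulVec (A : Matrix (Fin m) (Fin n) ℝ) (k : Fin n) :
    (Aᴴ * A) *ᵥ evec A k = eigs A k • evec A k :=
  by
    have h := (hermT A).mulVec_eigenvectorBasis k
    rw [show Aᴴ = Aᵀ from by ext i j; simp [Matrix.conjTranspose_apply]]
    exact h

lemma ct_eq (A : Matrix (Fin m) (Fin n) ℝ) : Aᴴ = Aᵀ := by
  ext i j; simp [Matrix.conjTranspose_apply]

lemma dotA (A : Matrix (Fin m) (Fin n) ℝ) (x y : Fin n → ℝ) :
    (A *ᵥ x) ⬝ᵥ (A *ᵥ y) = x ⬝ᵥ ((Aᴴ * A) *ᵥ y) := by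
  rw [ct_eq, ← Matrix.mulVec_mulVec, dot_transpose]

lemma Av_dot (A : Matrix (Fin m) (Fin n) ℝ) (k l : Fin n) :
    (A *ᵥ evec A k) ⬝ᵥ (A *ᵥ evec A l) = (if k = l then eigs A l else 0) := by
  rw [dotA, AA_mulVec, dotProduct_smul, evec_on]
  by_cases h : k = l <;> simp [h]

lemma evec_complete (A : Matrix (Fin m) (Fin n) ℝ) (i j : Fin n) :
    ∑ k, evec A k i * evec A k j = (if i = j then (1:ℝ) else 0) := by
  set hA := hermT A
  set V : Matrix (Fin n) (Fin n) ℝ := (hA.eigenvectorUnitary : Matrix (Fin n) (Fin n) ℝ) with hV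
  have hmem := (Unitary.mem_iff).1 hA.eigenvectorUnitary.prop
  have h1 : V * star V = 1 := hmem.2
  have := congrFun (congrFun h1 i) j
  simp only [Matrix.mul_apply, Matrix.star_apply, Matrix.one_apply, star_trivial] at this
  calc ∑ k, evec A k i * evec A k j = ∑ k, V i k * star (V j k) := by
        refine Finset.sum_congr rfl fun k _ => ?_
        simp [hV, Matrix.IsHermitian.eigenvectorUnitary_apply, evec]
    _ = (if i = j then (1:ℝ) else 0) := this

lemma expand (A : Matrix (Fin m) (Fin n) ℝ) (x : Fin n → ℝ) :
    x = ∑ k, (evec A k ⬝ᵥ x) • evec A k := by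
  funext j
  simp only [Finset.sum_apply, Pi.smul_apply, smul_eq_mul, dotProduct]
  calc x j = ∑ l, (if j = l then (1:ℝ) else 0) * x l := by simp
    _ = ∑ l, (∑ k, evec A k j * evec A k l) * x l := by
        refine Finset.sum_congr rfl fun l _ => ?_
        rw [evec_complete]
    _ = ∑ k, (∑ l, evec A k l * x l) * evec A k j := by
        simp_rw [Finset.sum_mul]
        rw [Finset.sum_comm]
        refine Finset.sum_congr rfl fun k _ => Finset.sum_congr rfl fun l _ => by ring

lemma Av_eq_zero (A : Matrix (Fin m) (Fin n) ℝ) (k : Fin n) (h : eigs A k = 0) :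
    A *ᵥ evec A k = 0 := by
  have h2 : (A *ᵥ evec A k) ⬝ᵥ (A *ᵥ evec A k) = 0 := by
    rw [Av_dot]; simp [h]
  funext i
  have : ∑ j, (A *ᵥ evec A k) j * (A *ᵥ evec A k) j = 0 := h2
  have hz := (Finset.sum_eq_zero_iff_of_nonneg (fun j _ => mul_self_nonneg _)).1 this i
    (Finset.mem_univ i)
  have := mul_self_eq_zero.1 hz
  simpa using this

/-! ### Trace norm via eigenvalues -/

lemma traceNorm_eq (A : Matrix (Fin m) (Fin n) ℝ) :
    traceNorm A = ∑ k, Real.sqrt (eigs A k) := by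
  set g : Fin n → ℝ := fun k => Real.sqrt (eigs A k) with hg
  have : traceNorm A = ∑ i : Fin n, g (Tuple.sort g (Fin.rev i)) := rfl
  rw [this]
  exact Equiv.sum_comp (Fin.revPerm.trans (Tuple.sort g)) g

lemma sqrt_eigs_le_sval0 (A : Matrix (Fin m) (Fin n) ℝ) (k : Fin n) :
    Real.sqrt (eigs A k) ≤ svalI A 0 := by
  have hn : 0 < n := k.pos
  set g : Fin n → ℝ := fun k => Real.sqrt (eigs A k) with hg
  have h0 : svalI A 0 = g (Tuple.sort g (Fin.rev ⟨0, hn⟩)) := by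
    simp only [svalI, hn, dif_pos]
    rfl
  rw [h0]
  have hmono := Tuple.monotone_sort g
  show g k ≤ _
  have : g k = (g ∘ Tuple.sort g) ((Tuple.sort g).symm k) := by simp
  rw [this]
  apply hmono
  rw [Fin.le_def, Fin.val_rev]
  simp only []
  omega

lemma exists_sval0 (A : Matrix (Fin m) (Fin n) ℝ) (hn : 0 < n) :
    ∃ k : Fin n, svalI A 0 = Real.sqrt (eigs A k) := by
  set g : Fin n → ℝ := fun k => Real.sqrt (eigs A k) with hg
  refine ⟨Tuple.sort g (Fin.rev ⟨0, hn⟩), ?_⟩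
  simp only [svalI, hn, dif_pos]
  rfl

lemma sval0_nonneg (A : Matrix (Fin m) (Fin n) ℝ) : 0 ≤ svalI A 0 := by
  by_cases h : 0 < n
  · have h0 : svalI A 0 = svalsFin A ⟨0, h⟩ := by simp [svalI, h]
    rw [h0]
    exact Real.sqrt_nonneg _
  · simp [svalI, h]

/-! ### Small linear-algebra helpers -/

lemma dot_sum_right {d : ℕ} {ι : Type*} [Fintype ι] (x : Fin d → ℝ) (f : ι → Fin d → ℝ) :
    x ⬝ᵥ (∑ k, f k) = ∑ k, x ⬝ᵥ f k := by
  simp only [dotProduct, Finset.sum_apply, Finset.mul_sum]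
  exact Finset.sum_comm

lemma mulVec_sum {d : ℕ} {ι : Type*} [Fintype ι] (A : Matrix (Fin m) (Fin d) ℝ)
    (f : ι → Fin d → ℝ) : A *ᵥ (∑ k, f k) = ∑ k, A *ᵥ f k := by
  funext i
  simp only [Matrix.mulVec, Finset.sum_apply]
  exact dot_sum_right _ _

lemma vecMulVec_mulVec (x : Fin m → ℝ) (y : Fin n → ℝ) (w : Fin n → ℝ) :
    Matrix.vecMulVec x y *ᵥ w = (y ⬝ᵥ w) • x := by
  funext i
  simp only [Matrix.mulVec, Matrix.vecMulVec_apply, dotProduct, Pi.smul_apply,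
    smul_eq_mul, Finset.mul_sum]
  rw [Finset.sum_mul]
  exact Finset.sum_congr rfl fun j _ => by ring

lemma sum_mulVec {ι : Type*} [Fintype ι] (A : ι → Matrix (Fin m) (Fin n) ℝ) (x : Fin n → ℝ) :
    (∑ k, A k) *ᵥ x = ∑ k, A k *ᵥ x := by
  funext i
  simp only [Matrix.mulVec, dotProduct, Matrix.sum_apply, Finset.sum_apply,
    Finset.sum_mul]
  exact Finset.sum_comm

/-! ### Duality bound : `∑ i, pᵢ ⬝ᵥ (A *ᵥ qᵢ) ≤ ‖A‖_*` for orthonormal families -/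

lemma dual_le {ι : Type*} [Fintype ι] [DecidableEq ι] (A : Matrix (Fin m) (Fin n) ℝ)
    {p : ι → Fin m → ℝ} {q : ι → Fin n → ℝ} (hp : ON p) (hq : ON q) :
    ∑ i, p i ⬝ᵥ (A *ᵥ q i) ≤ traceNorm A := by
  have key : ∀ i, p i ⬝ᵥ (A *ᵥ q i)
      = ∑ k, (evec A k ⬝ᵥ q i) * (p i ⬝ᵥ (A *ᵥ evec A k)) := by
    intro i
    conv_lhs => rw [expand A (q i)]
    rw [show A *ᵥ (∑ k, (evec A k ⬝ᵥ q i) • evec A k)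
        = ∑ k, (evec A k ⬝ᵥ q i) • (A *ᵥ evec A k) by
      rw [mulVec_sum]
      exact Finset.sum_congr rfl fun k _ => Matrix.mulVec_smul _ _ _]
    rw [dot_sum_right]
    exact Finset.sum_congr rfl fun k _ => by
      rw [dotProduct_smul]; simp only [smul_eq_mul]
  rw [Finset.sum_congr rfl fun i _ => key i, Finset.sum_comm, traceNorm_eq]
  refine Finset.sum_le_sum fun k _ => ?_
  by_cases hk : eigs A k = 0
  · rw [Av_eq_zero A k hk]
    simp [hk]
  · have hlpos : 0 < eigs A k := lt_of_le_of_ne (eigs_nonneg A k) (Ne.symm hk)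
    set s := Real.sqrt (eigs A k) with hs
    have hspos : 0 < s := Real.sqrt_pos.2 hlpos
    set a : Fin m → ℝ := s⁻¹ • (A *ᵥ evec A k) with ha
    have hAv : A *ᵥ evec A k = s • a := by
      rw [ha, smul_smul, mul_inv_cancel₀ (ne_of_gt hspos), one_smul]
    have haa : a ⬝ᵥ a = 1 := by
      have hss : Real.sqrt (eigs A k) * Real.sqrt (eigs A k) = eigs A k :=
        Real.mul_self_sqrt hlpos.le
      rw [ha, smul_dotProduct, dotProduct_smul, Av_dot]
      simp only [eq_self_iff_true, if_true, smul_eq_mul]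
      rw [hs]
      have hsne : Real.sqrt (eigs A k) ≠ 0 := ne_of_gt (Real.sqrt_pos.2 hlpos)
      field_simp
      rw [Real.sq_sqrt hlpos.le]
    calc ∑ i, (evec A k ⬝ᵥ q i) * (p i ⬝ᵥ (A *ᵥ evec A k))
        = s * ∑ i, (p i ⬝ᵥ a) * (q i ⬝ᵥ evec A k) := by
          rw [Finset.mul_sum]
          refine Finset.sum_congr rfl fun i _ => ?_
          rw [hAv, dotProduct_smul, dotProduct_comm (evec A k) (q i)]
          simp only [smul_eq_mul]; ring
      _ ≤ s * 1 := by
          refine mul_le_mul_of_nonneg_left ?_ (le_of_lt hspos)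
          have hb1 : ∑ i, (p i ⬝ᵥ a) ^ 2 ≤ 1 := haa ▸ bessel hp a
          have hb2 : ∑ i, (q i ⬝ᵥ evec A k) ^ 2 ≤ 1 := by
            have h := bessel hq (evec A k)
            have := evec_on A k k
            simp only [if_pos rfl] at this
            rwa [this] at h
          calc ∑ i, (p i ⬝ᵥ a) * (q i ⬝ᵥ evec A k)
              ≤ Real.sqrt (∑ i, (p i ⬝ᵥ a) ^ 2) * Real.sqrt (∑ i, (q i ⬝ᵥ evec A k) ^ 2) :=
                cs _ _
            _ ≤ 1 * 1 := by
                have n1 : Real.sqrt (∑ i, (p i ⬝ᵥ a) ^ 2) ≤ 1 := by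
                  rw [show (1:ℝ) = Real.sqrt 1 by simp]
                  exact Real.sqrt_le_sqrt hb1
                have n2 : Real.sqrt (∑ i, (q i ⬝ᵥ evec A k) ^ 2) ≤ 1 := by
                  rw [show (1:ℝ) = Real.sqrt 1 by simp]
                  exact Real.sqrt_le_sqrt hb2
                exact mul_le_mul n1 n2 (Real.sqrt_nonneg _) (by norm_num)
            _ = 1 := by norm_num
      _ = Real.sqrt (eigs A k) := by rw [mul_one]


/-! ### Singular vectors attached to a matrix -/

def uvecs (A : Matrix (Fin m) (Fin n) ℝ) : Fin n → Fin m → ℝ := fun k =>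
  if eigs A k = 0 then 0 else (Real.sqrt (eigs A k))⁻¹ • (A *ᵥ evec A k)

lemma uvec_dot (A : Matrix (Fin m) (Fin n) ℝ) (k l : Fin n) :
    uvecs A k ⬝ᵥ uvecs A l = if (k = l ∧ eigs A k ≠ 0) then 1 else 0 := by
  by_cases hk : eigs A k = 0
  · have : ¬(k = l ∧ eigs A k ≠ 0) := fun h => h.2 hk
    simp [uvecs, hk, this]
  by_cases hl : eigs A l = 0
  · have hkl : k ≠ l := fun he => hk (he ▸ hl)
    simp [uvecs, hl, hkl]
  · simp only [uvecs, if_neg hk, if_neg hl]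
    rw [smul_dotProduct, dotProduct_smul, Av_dot]
    by_cases he : k = l
    · subst he
      have hlpos : 0 < eigs A k := lt_of_le_of_ne (eigs_nonneg A k) (Ne.symm hk)
      have hsne : Real.sqrt (eigs A k) ≠ 0 := ne_of_gt (Real.sqrt_pos.2 hlpos)
      simp only [eq_self_iff_true, if_true, smul_eq_mul, hk, not_false_iff, and_self]
      field_simp
      simp [hk, Real.sq_sqrt hlpos.le]
    · have h2 : ¬(k = l ∧ eigs A k ≠ 0) := by rintro ⟨he', -⟩; exact he he'
      simp [he, h2]

lemma uvec_dot_Av (A : Matrix (Fin m) (Fin n) ℝ) (k : Fin n) :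
    uvecs A k ⬝ᵥ (A *ᵥ evec A k) = Real.sqrt (eigs A k) := by
  by_cases hk : eigs A k = 0
  · simp [uvecs, hk, Av_eq_zero A k hk]
  · have hlpos : 0 < eigs A k := lt_of_le_of_ne (eigs_nonneg A k) (Ne.symm hk)
    have hsne : Real.sqrt (eigs A k) ≠ 0 := ne_of_gt (Real.sqrt_pos.2 hlpos)
    simp only [uvecs, if_neg hk]
    rw [smul_dotProduct, Av_dot]
    simp only [eq_self_iff_true, if_true, smul_eq_mul]
    rw [show (Real.sqrt (eigs A k))⁻¹ * eigs A k = eigs A k / Real.sqrt (eigs A k) by ring]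
    exact Real.div_sqrt

lemma uvec_zero (A : Matrix (Fin m) (Fin n) ℝ) (k : Fin n) (hk : eigs A k = 0) :
    uvecs A k = 0 := by simp [uvecs, hk]

/-! ### Segment feasibility in the trace-norm ball -/

lemma segment_feasible (X : Matrix (Fin m) (Fin n) ℝ) (hX : traceNorm X ≤ 1)
    (us : Fin m → ℝ) (vs : Fin n → ℝ) (hus : us ⬝ᵥ us = 1) (hvs : vs ⬝ᵥ vs = 1)
    (t : ℝ) (ht0 : 0 ≤ t) (ht1 : t ≤ 1) :
    traceNorm ((1 - t) • X + t • (-(Matrix.vecMulVec us vs))) ≤ 1 := by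
  set Z := (1 - t) • X + t • (-(Matrix.vecMulVec us vs)) with hZ
  have hterm : ∀ k, Real.sqrt (eigs Z k)
      = (1 - t) * (uvecs Z k ⬝ᵥ (X *ᵥ evec Z k))
        + t * (-((uvecs Z k ⬝ᵥ us) * (vs ⬝ᵥ evec Z k))) := by
    intro k
    rw [← uvec_dot_Av Z k]
    have hv : Z *ᵥ evec Z k
        = (1 - t) • (X *ᵥ evec Z k) + t • (-((vs ⬝ᵥ evec Z k) • us)) := by
      rw [hZ, Matrix.add_mulVec, Matrix.smul_mulVec, Matrix.smul_mulVec,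
        Matrix.neg_mulVec, vecMulVec_mulVec]
    rw [hv, dotProduct_add, dotProduct_smul, dotProduct_smul,
      dotProduct_neg, dotProduct_smul]
    simp only [smul_eq_mul]
    ring
  rw [traceNorm_eq, Finset.sum_congr rfl fun k _ => hterm k, Finset.sum_add_distrib,
    ← Finset.mul_sum, ← Finset.mul_sum]
  set S : Finset (Fin n) := Finset.univ.filter (fun k => eigs Z k ≠ 0) with hS
  have hpON : ON (fun i : {x // x ∈ S} => uvecs Z i.1) := by
    intro i j
    have hi : eigs Z i.1 ≠ 0 := (Finset.mem_filter.1 i.2).2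
    have hj : eigs Z j.1 ≠ 0 := (Finset.mem_filter.1 j.2).2
    rw [uvec_dot]
    by_cases he : (i : Fin n) = (j : Fin n)
    · have hij : i = j := Subtype.ext he
      simp [he, hij, hi, hj]
    · have hij : i ≠ j := fun hij => he (congrArg Subtype.val hij)
      have h2 : ¬((i : Fin n) = (j : Fin n) ∧ eigs Z i.1 ≠ 0) := by
        rintro ⟨h, -⟩; exact he h
      simp [h2, hij]
  have hqON : ON (fun i : {x // x ∈ S} => evec Z i.1) := by
    intro i j
    rw [evec_on]
    by_cases he : (i : Fin n) = (j : Fin n)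
    · have hij : i = j := Subtype.ext he
      simp [he, hij]
    · have hij : i ≠ j := fun hij => he (congrArg Subtype.val hij)
      simp [he, hij]
  have hsum_subtype : ∀ g : Fin n → ℝ, (∀ k, eigs Z k = 0 → g k = 0) →
      ∑ k, g k = ∑ i : {x // x ∈ S}, g i.1 := by
    intro g hg
    have h1 : ∑ k ∈ S, g k = ∑ k, g k := by
      refine Finset.sum_filter_of_ne fun k _ hgk => ?_
      intro h0; exact hgk (hg k h0)
    rw [← h1, ← Finset.sum_attach S g, Finset.univ_eq_attach]
  have hT1 : ∑ k, uvecs Z k ⬝ᵥ (X *ᵥ evec Z k) ≤ 1 := by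
    rw [hsum_subtype _ (fun k hk => by rw [uvec_zero Z k hk, zero_dotProduct])]
    exact le_trans (dual_le X hpON hqON) hX
  have hT2 : ∑ k, -((uvecs Z k ⬝ᵥ us) * (vs ⬝ᵥ evec Z k)) ≤ 1 := by
    have key : ∑ k, -((uvecs Z k ⬝ᵥ us) * (vs ⬝ᵥ evec Z k))
        = ∑ k, (-(uvecs Z k ⬝ᵥ us)) * (vs ⬝ᵥ evec Z k) := by
      refine Finset.sum_congr rfl fun k _ => by ring
    rw [key]
    have hb1 : ∑ k, (-(uvecs Z k ⬝ᵥ us)) ^ 2 ≤ 1 := by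
      have heq : ∀ k, (-(uvecs Z k ⬝ᵥ us)) ^ 2 = (uvecs Z k ⬝ᵥ us) ^ 2 := fun k => by ring
      rw [Finset.sum_congr rfl fun k _ => heq k]
      rw [hsum_subtype _ (fun k hk => by rw [uvec_zero Z k hk, zero_dotProduct]; norm_num)]
      exact le_trans (bessel hpON us) (le_of_eq hus)
    have hb2 : ∑ k, (vs ⬝ᵥ evec Z k) ^ 2 ≤ 1 := by
      have heq : ∀ k, (vs ⬝ᵥ evec Z k) ^ 2 = (evec Z k ⬝ᵥ vs) ^ 2 := fun k => by
        rw [dotProduct_comm]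
      rw [Finset.sum_congr rfl fun k _ => heq k]
      exact le_trans (bessel (evec_on Z) vs) (le_of_eq hvs)
    calc ∑ k, (-(uvecs Z k ⬝ᵥ us)) * (vs ⬝ᵥ evec Z k)
        ≤ Real.sqrt (∑ k, (-(uvecs Z k ⬝ᵥ us)) ^ 2) * Real.sqrt (∑ k, (vs ⬝ᵥ evec Z k) ^ 2) :=
          cs _ _
      _ ≤ 1 * 1 := by
          have n1 : Real.sqrt (∑ k, (-(uvecs Z k ⬝ᵥ us)) ^ 2) ≤ 1 := by
            rw [show (1:ℝ) = Real.sqrt 1 by simp]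
            exact Real.sqrt_le_sqrt hb1
          have n2 : Real.sqrt (∑ k, (vs ⬝ᵥ evec Z k) ^ 2) ≤ 1 := by
            rw [show (1:ℝ) = Real.sqrt 1 by simp]
            exact Real.sqrt_le_sqrt hb2
          exact mul_le_mul n1 n2 (Real.sqrt_nonneg _) (by norm_num)
      _ = 1 := by norm_num
  have h1t : 0 ≤ 1 - t := by linarith
  calc (1 - t) * (∑ k, uvecs Z k ⬝ᵥ (X *ᵥ evec Z k))
        + t * (∑ k, -((uvecs Z k ⬝ᵥ us) * (vs ⬝ᵥ evec Z k)))
      ≤ (1 - t) * 1 + t * 1 := by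
        gcongr
    _ = 1 := by ring

/-! ### Rayleigh-type bound -/

lemma dot_le_sval0 (G : Matrix (Fin m) (Fin n) ℝ) (x : Fin m → ℝ) (y : Fin n → ℝ)
    (hx : x ⬝ᵥ x = 1) (hy : y ⬝ᵥ y = 1) : x ⬝ᵥ (G *ᵥ y) ≤ svalI G 0 := by
  have h1 : x ⬝ᵥ (G *ᵥ y) ≤ Real.sqrt ((G *ᵥ y) ⬝ᵥ (G *ᵥ y)) := by
    have hcs := cs x (G *ᵥ y)
    have e1 : ∑ i, x i * (G *ᵥ y) i = x ⬝ᵥ (G *ᵥ y) := rfl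
    have e2 : ∑ i, x i ^ 2 = x ⬝ᵥ x := by
      refine Finset.sum_congr rfl fun i _ => by rw [sq]
    have e3 : ∑ i, (G *ᵥ y) i ^ 2 = (G *ᵥ y) ⬝ᵥ (G *ᵥ y) := by
      refine Finset.sum_congr rfl fun i _ => by rw [sq]
    rw [e1, e2, e3, hx] at hcs
    simpa using hcs
  have hyexp : G *ᵥ y = ∑ k, (evec G k ⬝ᵥ y) • (G *ᵥ evec G k) := by
    conv_lhs => rw [expand G y]
    rw [mulVec_sum]
    exact Finset.sum_congr rfl fun k _ => Matrix.mulVec_smul _ _ _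
  have dot_sum_left : ∀ {d : ℕ} {ι : Type} [Fintype ι] (x : Fin d → ℝ) (g : ι → Fin d → ℝ),
      (∑ k, g k) ⬝ᵥ x = ∑ k, g k ⬝ᵥ x := by
    intro d ι _ x g
    rw [dotProduct_comm, dot_sum_right]
    exact Finset.sum_congr rfl fun k _ => dotProduct_comm _ _
  have h2 : (G *ᵥ y) ⬝ᵥ (G *ᵥ y) = ∑ k, eigs G k * (evec G k ⬝ᵥ y) ^ 2 := by
    conv_lhs => rw [hyexp]
    rw [dot_sum_left]
    refine Finset.sum_congr rfl fun k _ => ?_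
    rw [smul_dotProduct, dot_sum_right]
    have hcollapse : ∀ l, (G *ᵥ evec G k) ⬝ᵥ ((evec G l ⬝ᵥ y) • (G *ᵥ evec G l))
        = if k = l then (evec G l ⬝ᵥ y) * eigs G l else 0 := by
      intro l
      rw [dotProduct_smul, Av_dot]
      by_cases h : k = l <;> simp [h]
    rw [Finset.sum_congr rfl fun l _ => hcollapse l]
    rw [Finset.sum_ite_eq Finset.univ k (fun l => (evec G l ⬝ᵥ y) * eigs G l)]
    simp only [Finset.mem_univ, if_true, smul_eq_mul]
    ring
  have h3 : ∑ k, eigs G k * (evec G k ⬝ᵥ y) ^ 2 ≤ svalI G 0 ^ 2 := by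
    have step : ∀ k, eigs G k * (evec G k ⬝ᵥ y) ^ 2
        ≤ svalI G 0 ^ 2 * (evec G k ⬝ᵥ y) ^ 2 := by
      intro k
      have he : eigs G k ≤ svalI G 0 ^ 2 := by
        have h := sqrt_eigs_le_sval0 G k
        have := Real.sq_sqrt (eigs_nonneg G k)
        nlinarith [Real.sqrt_nonneg (eigs G k)]
      exact mul_le_mul_of_nonneg_right he (sq_nonneg _)
    calc ∑ k, eigs G k * (evec G k ⬝ᵥ y) ^ 2
        ≤ ∑ k, svalI G 0 ^ 2 * (evec G k ⬝ᵥ y) ^ 2 := Finset.sum_le_sum fun k _ => step k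
      _ = svalI G 0 ^ 2 * ∑ k, (evec G k ⬝ᵥ y) ^ 2 := by rw [Finset.mul_sum]
      _ ≤ svalI G 0 ^ 2 * 1 := by
          refine mul_le_mul_of_nonneg_left ?_ (sq_nonneg _)
          exact le_trans (bessel (evec_on G) y) (le_of_eq hy)
      _ = svalI G 0 ^ 2 := by ring
  calc x ⬝ᵥ (G *ᵥ y) ≤ Real.sqrt ((G *ᵥ y) ⬝ᵥ (G *ᵥ y)) := h1
    _ ≤ Real.sqrt (svalI G 0 ^ 2) := by
        rw [h2]; exact Real.sqrt_le_sqrt h3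
    _ = svalI G 0 := Real.sqrt_sq (sval0_nonneg G)

/-! ### frobInner helpers -/

lemma frobInner_eq_clm (G H : Matrix (Fin m) (Fin n) ℝ) : frobInner G H = frobCLM G H := rfl

lemma frobInner_vecMulVec_left (x : Fin m → ℝ) (y : Fin n → ℝ) (M : Matrix (Fin m) (Fin n) ℝ) :
    frobInner (Matrix.vecMulVec x y) M = x ⬝ᵥ (M *ᵥ y) := by
  simp only [frobInner, Matrix.vecMulVec_apply, dotProduct, Matrix.mulVec]
  refine Finset.sum_congr rfl fun i _ => ?_
  rw [Finset.mul_sum]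
  exact Finset.sum_congr rfl fun j _ => by ring

lemma frobInner_vecMulVec_right (M : Matrix (Fin m) (Fin n) ℝ) (x : Fin m → ℝ) (y : Fin n → ℝ) :
    frobInner M (Matrix.vecMulVec x y) = x ⬝ᵥ (M *ᵥ y) := by
  rw [← frobInner_vecMulVec_left]
  simp only [frobInner]
  refine Finset.sum_congr rfl fun i _ => Finset.sum_congr rfl fun j _ => by ring

/-! ### First-order optimality -/

lemma foc {f : Matrix (Fin m) (Fin n) ℝ → ℝ} {G X W : Matrix (Fin m) (Fin n) ℝ}
    (hd : HasFDerivAt f (frobCLM G) X)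
    (hseg : ∀ t : ℝ, 0 < t → t ≤ 1 → f X ≤ f (X + t • (W - X))) :
    0 ≤ frobInner G (W - X) := by
  set D := W - X with hD
  have hline : HasDerivAt (fun t : ℝ => X + t • D) D 0 := by
    have h1 : HasDerivAt (fun t : ℝ => t • D) ((1:ℝ) • D) 0 :=
      (hasDerivAt_id (0:ℝ)).smul_const D
    rw [one_smul] at h1
    exact h1.const_add X
  have hd' : HasFDerivAt f (frobCLM G) ((fun t : ℝ => X + t • D) 0) := by
    simpa using hd
  have hphi : HasDerivAt (fun t : ℝ => f (X + t • D)) (frobCLM G D) 0 :=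
    hd'.comp_hasDerivAt 0 hline
  have hW : HasDerivWithinAt (fun t : ℝ => f (X + t • D)) (frobCLM G D) (Set.Ioi 0) 0 :=
    hphi.hasDerivWithinAt
  rw [hasDerivWithinAt_iff_tendsto_slope] at hW
  have hset : Set.Ioi (0:ℝ) \ {0} = Set.Ioi 0 := by
    ext z; simp only [Set.mem_diff, Set.mem_Ioi, Set.mem_singleton_iff]
    constructor
    · rintro ⟨h, -⟩; exact h
    · intro h; exact ⟨h, ne_of_gt h⟩
  rw [hset] at hW
  have hev : ∀ᶠ t in nhdsWithin 0 (Set.Ioi (0:ℝ)),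
      0 ≤ slope (fun t : ℝ => f (X + t • D)) 0 t := by
    filter_upwards [Ioc_mem_nhdsGT_of_mem (Set.mem_Ico.2 ⟨le_refl (0:ℝ), zero_lt_one⟩)]
      with t ht
    rcases ht with ⟨ht0, ht1⟩
    rw [slope_def_field]
    have h0 : f (X + (0:ℝ) • D) = f X := by simp
    have hle := hseg t ht0 ht1
    rw [div_eq_mul_inv]
    apply mul_nonneg
    · rw [h0]; linarith
    · simp only [sub_zero]
      exact inv_nonneg.2 ht0.le
  have := ge_of_tendsto hW hev
  rw [frobInner_eq_clm]
  exact this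

end Stmt1Aux
end Stmt1Aux

/-- If `X* = ∑_{i=1}^r σᵢ uᵢ vᵢᵀ` (σᵢ > 0) is an SVD of an optimal
solution `X*` of `min_{‖X‖_* ≤ 1} f(X)` for convex differentiable `f`, then for every
`i`, `−uᵢᵀ ∇f(X*) vᵢ = σ₁(∇f(X*))`, i.e. each pair `(−uᵢ, vᵢ)` is a singular-vector
pair of `∇f(X*)` corresponding to its largest singular value. -/
theorem stmt1 {m n : ℕ} (f : Matrix (Fin m) (Fin n) ℝ → ℝ)
    (gradf : Matrix (Fin m) (Fin n) ℝ → Matrix (Fin m) (Fin n) ℝ)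
    (hconv : ConvexOn ℝ Set.univ f)
    (hdiff : ∀ X, HasFDerivAt f (frobCLM (gradf X)) X)
    (Xstar : Matrix (Fin m) (Fin n) ℝ)
    (hfeas : traceNorm Xstar ≤ 1)
    (hopt : ∀ Z, traceNorm Z ≤ 1 → f Xstar ≤ f Z)
    (r : ℕ) (u : Fin r → (Fin m → ℝ)) (v : Fin r → (Fin n → ℝ)) (σ : Fin r → ℝ)
    (hu : ∀ i j, ∑ k, u i k * u j k = if i = j then (1 : ℝ) else 0)
    (hv : ∀ i j, ∑ k, v i k * v j k = if i = j then (1 : ℝ) else 0)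
    (hσpos : ∀ i, 0 < σ i)
    (hX : Xstar = ∑ i, σ i • Matrix.vecMulVec (u i) (v i)) :
    ∀ i, frobInner (Matrix.vecMulVec (u i) (v i)) (gradf Xstar)
      = - svalI (gradf Xstar) 0 := by
  classical
  intro i
  set G := gradf Xstar with hG
  have huON : Stmt1Aux.ON u := fun a b => hu a b
  have hvON : Stmt1Aux.ON v := fun a b => hv a b
  have hm : 0 < m := by
    rcases Nat.eq_zero_or_pos m with h | h
    · exfalso; subst h
      have := hu i i
      simp at this
    · exact h
  have hn : 0 < n := by
    rcases Nat.eq_zero_or_pos n with h | h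
    · exfalso; subst h
      have := hv i i
      simp at this
    · exact h
  set c : Fin r → ℝ := fun j => u j ⬝ᵥ (G *ᵥ v j) with hc
  have huu : ∀ j, u j ⬝ᵥ u j = 1 := fun j => by simpa [dotProduct] using hu j j
  have hvv : ∀ j, v j ⬝ᵥ v j = 1 := fun j => by simpa [dotProduct] using hv j j
  have hlow : ∀ j, -(svalI G 0) ≤ c j := by
    intro j
    have hneg : (-(u j)) ⬝ᵥ (-(u j)) = 1 := by
      rw [neg_dotProduct, dotProduct_neg, neg_neg]
      exact huu j
    have h := Stmt1Aux.dot_le_sval0 G (-(u j)) (v j) hneg (hvv j)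
    rw [neg_dotProduct] at h
    have : c j = u j ⬝ᵥ (G *ᵥ v j) := rfl
    linarith [h]
  have hupp : ∀ j, c j ≤ svalI G 0 := fun j =>
    Stmt1Aux.dot_le_sval0 G (u j) (v j) (huu j) (hvv j)
  have hXv : ∀ j, Xstar *ᵥ v j = σ j • u j := by
    intro j
    rw [hX, Stmt1Aux.sum_mulVec]
    have hterm : ∀ l, (σ l • Matrix.vecMulVec (u l) (v l)) *ᵥ v j
        = if l = j then σ j • u j else 0 := by
      intro l
      rw [Matrix.smul_mulVec, Stmt1Aux.vecMulVec_mulVec,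
        show v l ⬝ᵥ v j = if l = j then (1:ℝ) else 0 from hv l j]
      by_cases h : l = j
      · subst h; simp
      · simp [h]
    rw [Finset.sum_congr rfl fun l _ => hterm l, Finset.sum_ite_eq' Finset.univ j]
    simp
  have hsigma_le : ∑ j, σ j ≤ 1 := by
    have hdual := Stmt1Aux.dual_le Xstar huON hvON
    have he : ∀ j, u j ⬝ᵥ (Xstar *ᵥ v j) = σ j := by
      intro j
      rw [hXv j, dotProduct_smul, huu j]
      simp
    rw [Finset.sum_congr rfl fun j _ => he j] at hdual
    exact le_trans hdual hfeas
  have hfrob : frobInner G Xstar = ∑ j, σ j * c j := by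
    rw [Stmt1Aux.frobInner_eq_clm, hX, map_sum]
    refine Finset.sum_congr rfl fun j _ => ?_
    rw [_root_.map_smul, smul_eq_mul]
    congr 1
    rw [← Stmt1Aux.frobInner_eq_clm, Stmt1Aux.frobInner_vecMulVec_right]
  rw [Stmt1Aux.frobInner_vecMulVec_left]
  obtain ⟨k0, hk0⟩ := Stmt1Aux.exists_sval0 G hn
  by_cases hzero : Stmt1Aux.eigs G k0 = 0
  · have hs0 : svalI G 0 = 0 := by rw [hk0, hzero]; simp
    have h1 := hlow i
    have h2 := hupp i
    show c i = -svalI G 0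
    rw [hs0] at h1 h2 ⊢
    linarith
  · set vs := Stmt1Aux.evec G k0 with hvs
    set us := Stmt1Aux.uvecs G k0 with husdef
    have husu : us ⬝ᵥ us = 1 := by
      rw [husdef, Stmt1Aux.uvec_dot]
      simp [hzero]
    have hvsv : vs ⬝ᵥ vs = 1 := by
      have := Stmt1Aux.evec_on G k0 k0
      simpa using this
    have husdot : us ⬝ᵥ (G *ᵥ vs) = svalI G 0 := by
      rw [husdef, hvs, Stmt1Aux.uvec_dot_Av]
      exact hk0.symm
    set W : Matrix (Fin m) (Fin n) ℝ := -(Matrix.vecMulVec us vs) with hW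
    have hseg : ∀ t : ℝ, 0 < t → t ≤ 1 → f Xstar ≤ f (Xstar + t • (W - Xstar)) := by
      intro t ht0 ht1
      apply hopt
      have hcomb : Xstar + t • (W - Xstar) = (1 - t) • Xstar + t • W := by
        rw [smul_sub, sub_smul, one_smul]
        abel
      rw [hcomb, hW]
      exact Stmt1Aux.segment_feasible Xstar hfeas us vs husu hvsv t ht0.le ht1
    have hfoc := Stmt1Aux.foc (hdiff Xstar) hseg
    have hfW : frobInner G W = -(svalI G 0) := by
      rw [Stmt1Aux.frobInner_eq_clm, hW, map_neg, ← Stmt1Aux.frobInner_eq_clm,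
        Stmt1Aux.frobInner_vecMulVec_right, husdot]
    have hfsub : frobInner G (W - Xstar) = frobInner G W - frobInner G Xstar := by
      rw [Stmt1Aux.frobInner_eq_clm, Stmt1Aux.frobInner_eq_clm, Stmt1Aux.frobInner_eq_clm,
        map_sub]
    have hkey : ∑ j, σ j * c j ≤ -(svalI G 0) := by
      rw [hfsub, hfW, hfrob] at hfoc
      linarith
    have hterm_nonneg : ∀ j ∈ Finset.univ, 0 ≤ σ j * (c j + svalI G 0) := fun j _ =>
      mul_nonneg (hσpos j).le (by linarith [hlow j])
    have hsum_le : ∑ j, σ j * (c j + svalI G 0) ≤ 0 := by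
      have e : ∑ j, σ j * (c j + svalI G 0) = (∑ j, σ j * c j) + svalI G 0 * ∑ j, σ j := by
        rw [Finset.mul_sum]
        rw [← Finset.sum_add_distrib]
        exact Finset.sum_congr rfl fun j _ => by ring
      have h2 : svalI G 0 * ∑ j, σ j ≤ svalI G 0 := by
        have hnn := Stmt1Aux.sval0_nonneg G
        nlinarith [hsigma_le]
      rw [e]
      linarith [hkey]
    have hall := (Finset.sum_eq_zero_iff_of_nonneg hterm_nonneg).1
      (le_antisymm hsum_le (Finset.sum_nonneg hterm_nonneg)) i (Finset.mem_univ i)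
    have hci : c i + svalI G 0 = 0 := by
      rcases mul_eq_zero.1 hall with h | h
      · exact absurd h (hσpos i).ne'
      · exact h
    show c i = -svalI G 0
    linarith
end

section
/- Let X ∈ 𝕊^n be a real symmetric n×n matrix with eigendecomposition X = Σ_{i=1}^n λ_i v_i v_iᵀ, λ_1 ≥ … ≥ λ_n. If Σ_{i: λ_i > 0} λ_i ≥ 1, then the Euclidean projection of X onto the spectrahedron 𝒮_n equals Σ_{i=1}^n max{0, λ_i − λ} v_i v_iᵀ, where λ ∈ ℝ is the unique solution of Σ_{i=1}^n max{0, λ_i − λ} = 1. Moreover, if there exists r ∈ {1, …, n − 1} with Σ_{i=1}^r λ_i ≥ 1 + r·λ_{r+1}, then this projection has rank at most r. -/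
/- Common definitions: Frobenius norm and inner product, singular values in
non-increasing order, trace (nuclear) norm, multiplicity of the top singular
value, Euclidean projection onto the trace-norm ball, the spectrahedron and its
projection, sorted eigenvalues of symmetric matrices, best rank-`r`
approximations, and the singular-value soft-thresholding (prox) operator. -/

open scoped BigOperators
open Matrix MeasureTheory ProbabilityTheory

attribute [local instance] Matrix.normedAddCommGroup Matrix.normedSpace

noncomputable section Helpers

open Matrix

lemma frobInner_comm' {m n : ℕ} (A B : Matrix (Fin m) (Fin n) ℝ) :
    frobInner A B = frobInner B A := by
  simp [frobInner, mul_comm]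

lemma frobInner_sub_left' {m n : ℕ} (A B C : Matrix (Fin m) (Fin n) ℝ) :
    frobInner (A - B) C = frobInner A C - frobInner B C := by
  simp [frobInner, Matrix.sub_apply, sub_mul, Finset.sum_sub_distrib]

lemma frobInner_sub_right' {m n : ℕ} (A B C : Matrix (Fin m) (Fin n) ℝ) :
    frobInner A (B - C) = frobInner A B - frobInner A C := by
  simp [frobInner, Matrix.sub_apply, mul_sub, Finset.sum_sub_distrib]

lemma frobInner_self_nonneg' {m n : ℕ} (A : Matrix (Fin m) (Fin n) ℝ) :
    0 ≤ frobInner A A := by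
  refine Finset.sum_nonneg fun i _ => Finset.sum_nonneg fun j _ => mul_self_nonneg _

lemma frobNorm_eq_sqrt {m n : ℕ} (A : Matrix (Fin m) (Fin n) ℝ) :
    frobNorm A = Real.sqrt (frobInner A A) := by
  simp [frobNorm, frobInner, sq]

lemma frobInner_expand {m n : ℕ} (U W : Matrix (Fin m) (Fin n) ℝ) :
    frobInner (U - W) (U - W)
      = frobInner U U - 2 * frobInner U W + frobInner W W := by
  rw [frobInner_sub_left', frobInner_sub_right', frobInner_sub_right',
    frobInner_comm' W U]
  ring

lemma frobInner_self_eq_zero {m n : ℕ} {A : Matrix (Fin m) (Fin n) ℝ}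
    (h : frobInner A A ≤ 0) : A = 0 := by
  have h0 : frobInner A A = 0 := le_antisymm h (frobInner_self_nonneg' A)
  ext i j
  have h1 : ∀ i ∈ (Finset.univ : Finset (Fin m)), 0 ≤ ∑ j, A i j * A i j :=
    fun i _ => Finset.sum_nonneg fun j _ => mul_self_nonneg _
  have h2 := (Finset.sum_eq_zero_iff_of_nonneg h1).mp h0 i (Finset.mem_univ i)
  have h3 := (Finset.sum_eq_zero_iff_of_nonneg
    (fun j _ => mul_self_nonneg (A i j))).mp h2 j (Finset.mem_univ j)
  have := mul_self_eq_zero.mp h3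
  simpa using this

lemma rank_add_le' {m n : ℕ} (A B : Matrix (Fin m) (Fin n) ℝ) :
    (A + B).rank ≤ A.rank + B.rank := by
  rw [Matrix.rank, Matrix.rank, Matrix.rank, Matrix.mulVecLin_add]
  refine le_trans (Submodule.finrank_mono ?_)
    (Submodule.finrank_add_le_finrank_add_finrank _ _)
  rintro x ⟨y, rfl⟩
  exact Submodule.add_mem_sup ⟨y, rfl⟩ ⟨y, rfl⟩

lemma rank_sum_le' {m n : ℕ} {ι : Type*} (s : Finset ι)
    (f : ι → Matrix (Fin m) (Fin n) ℝ) :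
    (∑ i ∈ s, f i).rank ≤ ∑ i ∈ s, (f i).rank := by
  classical
  induction s using Finset.cons_induction with
  | empty => simp
  | cons a s ha ih =>
    rw [Finset.sum_cons, Finset.sum_cons]
    exact le_trans (rank_add_le' _ _) (Nat.add_le_add_left ih _)

lemma rank_smul_vecMulVec_le {n : ℕ} (c : ℝ) (w u : Fin n → ℝ) :
    (c • Matrix.vecMulVec w u).rank ≤ 1 := by
  have h : c • Matrix.vecMulVec w u = Matrix.vecMulVec (c • w) u := by
    ext i j
    simp [Matrix.vecMulVec_apply, mul_assoc]
  rw [h, Matrix.vecMulVec_eq Unit]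
  refine le_trans (Matrix.rank_mul_le_right _ _) ?_
  exact le_trans (Matrix.rank_le_card_height _) (by simp)

end Helpers

/-- projection onto the spectrahedron.
If `X = ∑ λᵢ vᵢ vᵢᵀ` is an eigendecomposition of the symmetric matrix `X`
(orthonormal `v`, `λ` non-increasing) with `∑_{λᵢ>0} λᵢ ≥ 1`, then for the unique
`l` with `∑ max 0 (λᵢ − l) = 1`, the matrix `∑ max 0 (λᵢ − l) vᵢ vᵢᵀ` is the
(unique) Euclidean projection of `X` onto the spectrahedron; moreover if
`∑_{i≤r} λᵢ ≥ 1 + r λ_{r+1}` for some `1 ≤ r ≤ n−1`, this projection has rank at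
most `r`. -/
theorem stmt14 {n : ℕ} (X : Matrix (Fin n) (Fin n) ℝ)
    (v : Fin n → (Fin n → ℝ)) (lam : Fin n → ℝ)
    (hv : ∀ i j, ∑ k, v i k * v j k = if i = j then (1 : ℝ) else 0)
    (hdesc : Antitone lam)
    (hX : X = ∑ i, lam i • Matrix.vecMulVec (v i) (v i))
    (hsum : 1 ≤ ∑ i, max 0 (lam i))
    (l : ℝ) (hl : ∑ i, max 0 (lam i - l) = 1) :
    (∀ l' : ℝ, ∑ i, max 0 (lam i - l') = 1 → l' = l) ∧
    IsSpectraProj X (∑ i, max 0 (lam i - l) • Matrix.vecMulVec (v i) (v i)) ∧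
    (∀ Q, IsSpectraProj X Q →
      Q = ∑ i, max 0 (lam i - l) • Matrix.vecMulVec (v i) (v i)) ∧
    (∀ r : ℕ, 1 ≤ r → ∀ hrn : r < n,
      1 + (r : ℝ) * lam ⟨r, hrn⟩ ≤ ∑ i : Fin n, (if (i : ℕ) < r then lam i else 0) →
      (∑ i, max 0 (lam i - l) • Matrix.vecMulVec (v i) (v i)).rank ≤ r) := by
  classical
  -- notation
  set P : Matrix (Fin n) (Fin n) ℝ :=
    ∑ i, max 0 (lam i - l) • Matrix.vecMulVec (v i) (v i) with hPdef
  -- orthonormality of the "columns"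
  have hvcol : ∀ j k : Fin n, ∑ i, v i j * v i k = if j = k then (1:ℝ) else 0 := by
    set V : Matrix (Fin n) (Fin n) ℝ := Matrix.of v with hVdef
    have hVVt : V * Vᵀ = 1 := by
      ext i j
      simpa [hVdef, Matrix.mul_apply, Matrix.one_apply] using hv i j
    have hVtV : Vᵀ * V = 1 := mul_eq_one_comm.mp hVVt
    intro j k
    have h1 : (Vᵀ * V) j k = (1 : Matrix (Fin n) (Fin n) ℝ) j k := by rw [hVtV]
    simpa [hVdef, Matrix.mul_apply, Matrix.one_apply] using h1
  -- Frobenius inner product of a spectral sum with any matrix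
  have hfrob_single : ∀ (w : Fin n → ℝ) (B : Matrix (Fin n) (Fin n) ℝ),
      frobInner (Matrix.vecMulVec w w) B = w ⬝ᵥ (B *ᵥ w) := by
    intro w B
    simp only [frobInner, Matrix.vecMulVec_apply, dotProduct, Matrix.mulVec,
      Finset.mul_sum]
    exact Finset.sum_congr rfl fun i _ => Finset.sum_congr rfl fun j _ => by ring
  have hfrob_sum : ∀ (f : Fin n → Matrix (Fin n) (Fin n) ℝ)
      (B : Matrix (Fin n) (Fin n) ℝ),
      frobInner (∑ k, f k) B = ∑ k, frobInner (f k) B := by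
    intro f B
    rw [frobInner_comm']
    have h1 : frobInner B (∑ k, f k) = frobCLM B (∑ k, f k) := rfl
    rw [h1, map_sum]
    exact Finset.sum_congr rfl fun k _ => frobInner_comm' B (f k)
  have hfrob_smul : ∀ (a : ℝ) (A B : Matrix (Fin n) (Fin n) ℝ),
      frobInner (a • A) B = a * frobInner A B := by
    intro a A B
    simp [frobInner, Matrix.smul_apply, smul_eq_mul, Finset.mul_sum, mul_assoc]
  have hfrob : ∀ (a : Fin n → ℝ) (B : Matrix (Fin n) (Fin n) ℝ),
      frobInner (∑ k, a k • Matrix.vecMulVec (v k) (v k)) B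
        = ∑ k, a k * (v k ⬝ᵥ (B *ᵥ v k)) := by
    intro a B
    rw [hfrob_sum]
    exact Finset.sum_congr rfl fun k _ => by rw [hfrob_smul, hfrob_single]
  -- quadratic forms
  have hquad_eq : ∀ (A : Matrix (Fin n) (Fin n) ℝ) (x : Fin n → ℝ),
      x ⬝ᵥ (A *ᵥ x) = frobInner A (Matrix.vecMulVec x x) := by
    intro A x
    simp only [frobInner, Matrix.vecMulVec_apply, dotProduct, Matrix.mulVec,
      Finset.mul_sum]
    exact Finset.sum_congr rfl fun i _ => Finset.sum_congr rfl fun j _ => by ring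
  have hquad : ∀ (a : Fin n → ℝ) (x : Fin n → ℝ),
      x ⬝ᵥ ((∑ k, a k • Matrix.vecMulVec (v k) (v k)) *ᵥ x)
        = ∑ k, a k * (v k ⬝ᵥ x) ^ 2 := by
    intro a x
    rw [hquad_eq, hfrob]
    refine Finset.sum_congr rfl fun k _ => ?_
    congr 1
    have h2 : (v k ⬝ᵥ x) ^ 2 = ∑ i, ∑ j, (v k i * x i) * (v k j * x j) := by
      rw [sq, dotProduct, Finset.sum_mul_sum]
    rw [h2]
    simp only [dotProduct, Matrix.mulVec, Matrix.vecMulVec_apply, Finset.mul_sum]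
    exact Finset.sum_congr rfl fun i _ => Finset.sum_congr rfl fun j _ => by ring
  -- traces
  have htrE : ∀ k, (Matrix.vecMulVec (v k) (v k)).trace = 1 := by
    intro k
    have h1 := hv k k
    simp only [if_pos rfl] at h1
    simpa [Matrix.trace, Matrix.diag, Matrix.vecMulVec_apply] using h1
  have htrace : ∀ (a : Fin n → ℝ),
      (∑ k, a k • Matrix.vecMulVec (v k) (v k)).trace = ∑ k, a k := by
    intro a
    simp [Matrix.trace_sum, Matrix.trace_smul, htrE, smul_eq_mul]
  have htraceB : ∀ (B : Matrix (Fin n) (Fin n) ℝ),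
      ∑ k, v k ⬝ᵥ (B *ᵥ v k) = B.trace := by
    intro B
    have h1 : ∀ k : Fin n, v k ⬝ᵥ (B *ᵥ v k)
        = ∑ i, ∑ j, B i j * (v k i * v k j) := by
      intro k
      simp only [dotProduct, Matrix.mulVec, Finset.mul_sum]
      exact Finset.sum_congr rfl fun i _ => Finset.sum_congr rfl fun j _ => by ring
    calc ∑ k, v k ⬝ᵥ (B *ᵥ v k) = ∑ k, ∑ i, ∑ j, B i j * (v k i * v k j) :=
          Finset.sum_congr rfl fun k _ => h1 k
      _ = ∑ i, ∑ k, ∑ j, B i j * (v k i * v k j) := Finset.sum_comm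
      _ = ∑ i, ∑ j, ∑ k, B i j * (v k i * v k j) :=
          Finset.sum_congr rfl fun i _ => Finset.sum_comm
      _ = ∑ i, ∑ j, B i j * ∑ k, v k i * v k j := by
          simp_rw [Finset.mul_sum]
      _ = B.trace := by
          simp [hvcol, Matrix.trace, Matrix.diag]
  -- basic facts about the coefficients
  have hcnn : ∀ i, (0:ℝ) ≤ max 0 (lam i - l) := fun i => le_max_left _ _
  have hdle : ∀ k, lam k - max 0 (lam k - l) ≤ l := by
    intro k
    rcases le_total (lam k - l) 0 with h | h
    · rw [max_eq_left h]; linarith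
    · rw [max_eq_right h]; linarith
  have hdc : ∀ k, (lam k - max 0 (lam k - l)) * max 0 (lam k - l)
      = l * max 0 (lam k - l) := by
    intro k
    rcases le_total (lam k - l) 0 with h | h
    · rw [max_eq_left h]; ring
    · rw [max_eq_right h]; ring
  -- membership of P in the spectrahedron
  have hpsd : P.PosSemidef := by
    refine Matrix.PosSemidef.of_dotProduct_mulVec_nonneg ?_ ?_
    · ext i j
      simp [hPdef, Matrix.conjTranspose_apply, Matrix.sum_apply,
        Matrix.vecMulVec_apply, mul_comm]
    · intro x
      have h1 : x ⬝ᵥ (P *ᵥ x) = ∑ k, max 0 (lam k - l) * (v k ⬝ᵥ x) ^ 2 := by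
        simpa using hquad (fun i => max 0 (lam i - l)) x
      have h2 : star x = x := by
        funext i; simp
      rw [h2, h1]
      exact Finset.sum_nonneg fun k _ => mul_nonneg (hcnn k) (sq_nonneg _)
  have htrP : P.trace = 1 := by
    rw [hPdef, htrace (fun i => max 0 (lam i - l))]
    exact hl
  have hmem : P ∈ SpectraSet n := ⟨hpsd, htrP⟩
  -- the residual X - P
  have hXP : frobInner (X - P) P = l := by
    have h0 : X - P = ∑ i, (lam i - max 0 (lam i - l)) • Matrix.vecMulVec (v i) (v i) := by
      rw [hX, hPdef, ← Finset.sum_sub_distrib]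
      exact Finset.sum_congr rfl fun i _ => by rw [sub_smul]
    have hPv : ∀ k, v k ⬝ᵥ (P *ᵥ v k) = max 0 (lam k - l) := by
      intro k
      have h1 : v k ⬝ᵥ (P *ᵥ v k)
          = ∑ j, max 0 (lam j - l) * (v j ⬝ᵥ v k) ^ 2 := by
        simpa using hquad (fun i => max 0 (lam i - l)) (v k)
      rw [h1, Finset.sum_eq_single k]
      · have := hv k k
        simp only [dotProduct]
        rw [this, if_pos rfl]
        ring
      · intro j _ hj
        have := hv j k
        simp only [dotProduct]
        rw [this, if_neg hj]
        ring
      · intro h; exact absurd (Finset.mem_univ k) h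
    have h2 : frobInner (X - P) P
        = ∑ k, (lam k - max 0 (lam k - l)) * (v k ⬝ᵥ (P *ᵥ v k)) := by
      rw [h0]
      simpa using hfrob (fun i => lam i - max 0 (lam i - l)) P
    rw [h2]
    have h3 : ∀ k : Fin n, (lam k - max 0 (lam k - l)) * (v k ⬝ᵥ (P *ᵥ v k))
        = l * max 0 (lam k - l) := by
      intro k
      rw [hPv k, hdc k]
    rw [Finset.sum_congr rfl fun k _ => h3 k, ← Finset.mul_sum, hl, mul_one]
  have hvarZ : ∀ Z ∈ SpectraSet n, frobInner (X - P) Z ≤ l := by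
    intro Z hZ
    have h0 : X - P = ∑ i, (lam i - max 0 (lam i - l)) • Matrix.vecMulVec (v i) (v i) := by
      rw [hX, hPdef, ← Finset.sum_sub_distrib]
      exact Finset.sum_congr rfl fun i _ => by rw [sub_smul]
    have h2 : frobInner (X - P) Z
        = ∑ k, (lam k - max 0 (lam k - l)) * (v k ⬝ᵥ (Z *ᵥ v k)) := by
      rw [h0]
      simpa using hfrob (fun i => lam i - max 0 (lam i - l)) Z
    have hw : ∀ k, 0 ≤ v k ⬝ᵥ (Z *ᵥ v k) := by
      intro k
      have h3 := hZ.1.dotProduct_mulVec_nonneg (v k)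
      have h4 : star (v k) = v k := by funext i; simp
      rwa [h4] at h3
    have hsw : ∑ k, v k ⬝ᵥ (Z *ᵥ v k) = 1 := by rw [htraceB]; exact hZ.2
    rw [h2]
    calc ∑ k, (lam k - max 0 (lam k - l)) * (v k ⬝ᵥ (Z *ᵥ v k))
        ≤ ∑ k, l * (v k ⬝ᵥ (Z *ᵥ v k)) :=
          Finset.sum_le_sum fun k _ =>
            mul_le_mul_of_nonneg_right (hdle k) (hw k)
      _ = l := by rw [← Finset.mul_sum, hsw, mul_one]
  have hvar : ∀ Z ∈ SpectraSet n, frobInner (X - P) (Z - P) ≤ 0 := by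
    intro Z hZ
    rw [frobInner_sub_right', hXP]
    linarith [hvarZ Z hZ]
  have hproj : IsSpectraProj X P := by
    refine ⟨hmem, fun Z hZ => ?_⟩
    rw [frobNorm_eq_sqrt, frobNorm_eq_sqrt]
    apply Real.sqrt_le_sqrt
    have h1 : X - Z = (X - P) - (Z - P) := by abel
    rw [h1, frobInner_expand (X - P) (Z - P)]
    have h2 := frobInner_self_nonneg' (Z - P)
    have h3 := hvar Z hZ
    linarith
  -- uniqueness of l
  have key : ∀ a b : ℝ, a < b → (∑ i, max 0 (lam i - b)) = 1 →
      (1:ℝ) < ∑ i, max 0 (lam i - a) := by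
    intro a b hab hb
    have hex : ∃ i : Fin n, 0 < max 0 (lam i - b) := by
      by_contra hcon
      push_neg at hcon
      have h1 : (∑ i, max 0 (lam i - b)) ≤ 0 :=
        Finset.sum_nonpos fun i _ => hcon i
      linarith
    obtain ⟨i0, hi0⟩ := hex
    have h1 : 0 < lam i0 - b := by
      by_contra h
      push_neg at h
      rw [max_eq_left h] at hi0
      exact lt_irrefl _ hi0
    have hlt : max 0 (lam i0 - b) < max 0 (lam i0 - a) := by
      calc max 0 (lam i0 - b) = lam i0 - b := max_eq_right h1.le
        _ < lam i0 - a := by linarith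
        _ ≤ max 0 (lam i0 - a) := le_max_right _ _
    have h2 := Finset.sum_lt_sum
      (fun i _ => max_le_max le_rfl (by linarith : lam i - b ≤ lam i - a))
      ⟨i0, Finset.mem_univ i0, hlt⟩
    rw [hb] at h2
    exact h2
  refine ⟨?_, hproj, ?_, ?_⟩
  · -- uniqueness of l
    intro l' hl'
    rcases lt_trichotomy l' l with h | h | h
    · exact absurd hl' (by have := key l' l h hl; linarith)
    · exact h
    · exact absurd hl (by have := key l l' h hl'; linarith)
  · -- uniqueness of the projection
    intro Q hQ
    have h1 : frobNorm (X - Q) ≤ frobNorm (X - P) := hQ.2 P hmem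
    have h2 : frobInner (X - Q) (X - Q) ≤ frobInner (X - P) (X - P) := by
      rw [frobNorm_eq_sqrt, frobNorm_eq_sqrt] at h1
      nlinarith [Real.sq_sqrt (frobInner_self_nonneg' (X - Q)),
        Real.sq_sqrt (frobInner_self_nonneg' (X - P)),
        Real.sqrt_nonneg (frobInner (X - Q) (X - Q)),
        Real.sqrt_nonneg (frobInner (X - P) (X - P))]
    have h3 : X - Q = (X - P) - (Q - P) := by abel
    rw [h3, frobInner_expand (X - P) (Q - P)] at h2
    have h5 := hvar Q hQ.1
    have h4 : frobInner (Q - P) (Q - P) ≤ 0 := by linarith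
    have h6 : Q - P = 0 := frobInner_self_eq_zero h4
    have := sub_eq_zero.mp h6
    rw [this]
  · -- rank bound
    intro r hr1 hrn hineq
    have hcard : (Finset.univ.filter fun i : Fin n => (i:ℕ) < r)
        = Finset.Iio (⟨r, hrn⟩ : Fin n) := by
      ext i
      simp [Fin.lt_def]
    have hmul : lam ⟨r, hrn⟩ ≤ l := by
      by_contra hcon
      push_neg at hcon
      have h1 : ∀ i : Fin n,
          (if (i:ℕ) < r then lam i - l else (0:ℝ)) ≤ max 0 (lam i - l) := by
        intro i
        split
        · exact le_max_right _ _
        · exact le_max_left _ _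
      have h2 : ∑ i : Fin n, (if (i:ℕ) < r then lam i - l else (0:ℝ)) ≤ 1 := by
        rw [← hl]
        exact Finset.sum_le_sum fun i _ => h1 i
      have h3 : ∑ i : Fin n, (if (i:ℕ) < r then lam i - l else (0:ℝ))
          = (∑ i : Fin n, if (i:ℕ) < r then lam i else 0) - r * l := by
        have h4 : ∀ i : Fin n, (if (i:ℕ) < r then lam i - l else (0:ℝ))
            = (if (i:ℕ) < r then lam i else 0) - (if (i:ℕ) < r then l else 0) := by
          intro i
          split <;> simp
        rw [Finset.sum_congr rfl fun i _ => h4 i, Finset.sum_sub_distrib]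
        congr 1
        rw [← Finset.sum_filter, hcard, Finset.sum_const, Fin.card_Iio]
        simp [mul_comm]
      rw [h3] at h2
      have hrpos : (1:ℝ) ≤ (r:ℝ) := by exact_mod_cast hr1
      nlinarith
    have hc0 : ∀ i : Fin n, r ≤ (i:ℕ) → max 0 (lam i - l) = 0 := by
      intro i hi
      have h1 : (⟨r, hrn⟩ : Fin n) ≤ i := by rwa [Fin.le_def]
      have h2 : lam i ≤ lam ⟨r, hrn⟩ := hdesc h1
      exact max_eq_left (by linarith)
    have hPfilter : P = ∑ i ∈ Finset.univ.filter (fun i : Fin n => (i:ℕ) < r),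
        max 0 (lam i - l) • Matrix.vecMulVec (v i) (v i) := by
      rw [hPdef]
      symm
      apply Finset.sum_subset (Finset.filter_subset _ _)
      intro i _ hi
      have h1 : ¬ (i:ℕ) < r := by simpa using hi
      rw [hc0 i (not_lt.mp h1), zero_smul]
    rw [hPfilter]
    refine le_trans (rank_sum_le' _ _) ?_
    calc ∑ i ∈ Finset.univ.filter (fun i : Fin n => (i:ℕ) < r),
          (max 0 (lam i - l) • Matrix.vecMulVec (v i) (v i)).rank
        ≤ ∑ _i ∈ Finset.univ.filter (fun i : Fin n => (i:ℕ) < r), 1 :=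
          Finset.sum_le_sum fun i _ => rank_smul_vecMulVec_le _ _ _
      _ = (Finset.univ.filter fun i : Fin n => (i:ℕ) < r).card := by simp
      _ = r := by rw [hcard, Fin.card_Iio]
end
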